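/- Let Y be a finite set and η : powerset(Y) → ℝ≥0 a multiplicative attention index, i.e., η(C) = ∏_{v∈C} η({v}) with η(∅) = 1 and η({v}) > 0 for all v. Define Q(v) = η({v})/(1 + η({v})). Then Q(v) ∈ (0,1) for all v, and for every A ⊆ Y the consideration probability η(A)/∑_{C⊆Y} η(C) equals ∏_{v∈A} Q(v) · ∏_{v∈Y\A}(1-Q(v)). -/

import Mathlib

theorem stmt_9 (Y : Type*) [Fintype Y] [DecidableEq Y] (η : Finset Y → ℝ)
    (hempty : η ∅ = 1) (hmult : ∀ C : Finset Y, η C = ∏ v ∈ C, η {v})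
    (hpos : ∀ v : Y, 0 < η {v}) (Q : Y → ℝ) (hQ : ∀ v, Q v = η {v} / (1 + η {v})) :
    (∀ v, Q v ∈ Set.Ioo (0:ℝ) 1)
    ∧ ∀ A : Finset Y,
        η A / (∑ C ∈ (Finset.univ : Finset Y).powerset, η C)
          = (∏ v ∈ A, Q v) * ∏ v ∈ Aᶜ, (1 - Q v) := by
  have hden : ∀ v : Y, (0:ℝ) < 1 + η {v} := fun v => by linarith [hpos v]
  constructor
  · intro v
    rw [hQ v]
    constructor
    · exact div_pos (hpos v) (hden v)
    · rw [div_lt_one (hden v)]; linarith [hpos v]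
  · intro A
    have hsum : (∑ C ∈ (Finset.univ : Finset Y).powerset, η C)
        = ∏ v : Y, (η {v} + 1) := by
      rw [Finset.prod_add]
      apply Finset.sum_congr rfl
      intro t _
      rw [hmult t, Finset.prod_const_one, mul_one]
    have h1 : ∀ v, 1 - Q v = 1 / (1 + η {v}) := by
      intro v
      rw [hQ v]
      field_simp [(hden v).ne']; ring
    have hprodpos : (0:ℝ) < ∏ v : Y, (1 + η {v}) :=
      Finset.prod_pos fun v _ => hden v
    rw [hsum, hmult A]
    have : (∏ v ∈ A, Q v) * ∏ v ∈ Aᶜ, (1 - Q v)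
        = (∏ v ∈ A, η {v}) / ∏ v : Y, (1 + η {v}) := by
      calc (∏ v ∈ A, Q v) * ∏ v ∈ Aᶜ, (1 - Q v)
          = ((∏ v ∈ A, η {v}) / ∏ v ∈ A, (1 + η {v})) *
            (1 / ∏ v ∈ Aᶜ, (1 + η {v})) := by
            rw [Finset.prod_congr rfl (fun v _ => hQ v),
              Finset.prod_congr rfl (fun v _ => h1 v),
              Finset.prod_div_distrib, Finset.prod_div_distrib,
              Finset.prod_const_one]
        _ = (∏ v ∈ A, η {v}) /
            ((∏ v ∈ A, (1 + η {v})) * ∏ v ∈ Aᶜ, (1 + η {v})) := by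
            field_simp
        _ = (∏ v ∈ A, η {v}) / ∏ v : Y, (1 + η {v}) := by
            rw [Finset.prod_mul_prod_compl]
    rw [this]
    congr 1
    exact Finset.prod_congr rfl fun v _ => by ring
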